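/- Let η : (0,1) → ℝ and suppose a qubit channel N has Bloch representation (t, T) with ‖T‖ < 1 (strictly contractive). Then for every binary POVM {M, 1−M} with M = N†(|φ⟩⟨φ|) for a pure state |φ⟩, the eigenvalues m₁, m₂ of M satisfy |m₁ − m₂| ≤ ‖T‖. Consequently 1 − (√(m₁m₂) + √((1−m₁)(1−m₂)))² ≤ ‖T‖ < 1. -/

import Mathlib

set_option maxHeartbeats 1000000
set_option synthInstance.maxHeartbeats 400000


open Matrix Complex
open scoped ComplexOrder

noncomputable section

/-- The Pauli matrices X, Y, Z. -/
def pauli : Fin 3 → Matrix (Fin 2) (Fin 2) ℂ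
  | 0 => !![0, 1; 1, 0]
  | 1 => !![0, -I; I, 0]
  | 2 => !![1, 0; 0, -1]

/-- The qubit state (or Hermitian matrix) with Bloch vector `w`: `(1 + w·σ)/2`. -/
def blochState (w : Fin 3 → ℝ) : Matrix (Fin 2) (Fin 2) ℂ :=
  (1 / 2 : ℂ) • (1 + ∑ i, (w i : ℂ) • pauli i)

/-- The Choi matrix of a linear map on 2×2 matrices. -/
def choi (E : Matrix (Fin 2) (Fin 2) ℂ →ₗ[ℂ] Matrix (Fin 2) (Fin 2) ℂ) :
    Matrix (Fin 2 × Fin 2) (Fin 2 × Fin 2) ℂ :=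
  Matrix.of fun p q => E (Matrix.single p.2 q.2 1) p.1 q.1

/-- The operator norm of a real 3×3 matrix, acting on Euclidean space. -/
def opNorm3 (T : Matrix (Fin 3) (Fin 3) ℝ) : ℝ :=
  ‖Matrix.toEuclideanCLM (𝕜 := ℝ) T‖

lemma scalar_ineq (m₁ m₂ : ℝ) :
    1 - (Real.sqrt (m₁ * m₂) + Real.sqrt ((1 - m₁) * (1 - m₂))) ^ 2 ≤ |m₁ - m₂| := by
  wlog h : m₂ ≤ m₁ generalizing m₁ m₂
  · have := this m₂ m₁ (le_of_not_ge h)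
    rw [abs_sub_comm, mul_comm m₂ m₁, mul_comm (1-m₂) (1-m₁)] at this
    exact this
  rw [_root_.abs_of_nonneg (by linarith)]
  rcases le_or_gt 0 (m₁ * m₂) with ha | ha
  · rcases le_or_gt 0 ((1 - m₁) * (1 - m₂)) with hb | hb
    · have hs := Real.sq_sqrt ha
      have ht := Real.sq_sqrt hb
      have hs0 := Real.sqrt_nonneg (m₁ * m₂)
      have ht0 := Real.sqrt_nonneg ((1 - m₁) * (1 - m₂))
      rcases le_or_gt 0 m₂ with h2 | h2
      · rcases le_or_gt m₁ 1 with h1 | h1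
        · have key : m₂ * (1 - m₁) ≤ Real.sqrt (m₁*m₂) * Real.sqrt ((1-m₁)*(1-m₂)) := by
            have h3 : (Real.sqrt (m₁*m₂) * Real.sqrt ((1-m₁)*(1-m₂)))^2
                = (m₂*(1-m₁)) * (m₁*(1-m₂)) := by nlinarith [hs, ht]
            nlinarith [sq_nonneg (Real.sqrt (m₁*m₂) * Real.sqrt ((1-m₁)*(1-m₂)) - m₂*(1-m₁)),
              mul_nonneg hs0 ht0, sq_nonneg (m₁ - m₂)]
          nlinarith
        · have h2' : 1 ≤ m₂ := by nlinarith
          nlinarith [mul_nonneg hs0 ht0]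
      · have h1 : m₁ ≤ 0 := by nlinarith
        nlinarith [mul_nonneg hs0 ht0]
    · rw [Real.sqrt_eq_zero_of_nonpos hb.le]
      have h1 : 1 < m₁ := by nlinarith
      have h2 : m₂ < 1 := by nlinarith
      have h2' : 0 ≤ m₂ := by nlinarith
      have hs1 : Real.sqrt (m₁*m₂) ^ 2 = m₁*m₂ := Real.sq_sqrt ha
      nlinarith [Real.sqrt_nonneg (m₁*m₂)]
  · rw [Real.sqrt_eq_zero_of_nonpos ha.le]
    have h2 : m₂ < 0 := by nlinarith
    have h1 : 0 < m₁ := by nlinarith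
    rcases le_or_gt 0 ((1-m₁)*(1-m₂)) with hb | hb
    · have ht := Real.sq_sqrt hb
      have ht0 := Real.sqrt_nonneg ((1-m₁)*(1-m₂))
      rcases le_or_gt m₁ 1 with h1' | h1'
      · nlinarith
      · nlinarith
    · rw [Real.sqrt_eq_zero_of_nonpos hb.le]
      have : 1 < m₁ := by nlinarith
      nlinarith

lemma I_cube : (Complex.I)^3 = -Complex.I := by
  rw [pow_succ, Complex.I_sq]; ring

lemma trace_mul_std (M : Matrix (Fin 2) (Fin 2) ℂ) (p q : Fin 2) :
    (M * Matrix.single q p 1).trace = M p q := by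
  fin_cases p <;> fin_cases q <;>
    simp [Matrix.trace_fin_two, Matrix.mul_apply, Matrix.single, Fin.sum_univ_two]

lemma std00 : Matrix.single (0:Fin 2) (0:Fin 2) (1:ℂ) = (1/2:ℂ) • (1 + pauli 2) := by
  ext i j; fin_cases i <;> fin_cases j <;>
    simp [Matrix.single, pauli, Matrix.one_fin_two] <;> norm_num

lemma std11 : Matrix.single (1:Fin 2) (1:Fin 2) (1:ℂ) = (1/2:ℂ) • (1 - pauli 2) := by
  ext i j; fin_cases i <;> fin_cases j <;>
    simp [Matrix.single, pauli, Matrix.one_fin_two] <;> norm_num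

lemma std01 : Matrix.single (0:Fin 2) (1:Fin 2) (1:ℂ) = (1/2:ℂ) • (pauli 0 + I • pauli 1) := by
  ext i j; fin_cases i <;> fin_cases j <;>
    simp [Matrix.single, pauli] <;> norm_num [Complex.I_mul_I]

lemma std10 : Matrix.single (1:Fin 2) (0:Fin 2) (1:ℂ) = (1/2:ℂ) • (pauli 0 - I • pauli 1) := by
  ext i j; fin_cases i <;> fin_cases j <;>
    simp [Matrix.single, pauli] <;> norm_num [Complex.I_mul_I]

/-- If a strictly contractive qubit channel `N` (Bloch representation
`(t, T)`, `‖T‖ < 1`) has dual map `N†`, then for any pure state `|φ⟩` the eigenvalues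
`m₁, m₂` of `M = N†(|φ⟩⟨φ|)` satisfy `|m₁ − m₂| ≤ ‖T‖`, and consequently
`1 − (√(m₁m₂) + √((1−m₁)(1−m₂)))² ≤ ‖T‖ < 1`. -/
theorem contraction_coefficient_bound
    (N Nd : Matrix (Fin 2) (Fin 2) ℂ →ₗ[ℂ] Matrix (Fin 2) (Fin 2) ℂ)
    (hTP : ∀ A, (N A).trace = A.trace)
    (hCP : (choi N).PosSemidef)
    (hdual : ∀ A B, (Nd A * B).trace = (A * N B).trace)
    (t : Fin 3 → ℝ) (T : Matrix (Fin 3) (Fin 3) ℝ)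
    (hBloch : ∀ w : Fin 3 → ℝ,
      N (blochState w) = blochState fun i => t i + T.mulVec w i)
    (hT : opNorm3 T < 1)
    (φ : Fin 2 → ℂ) (hφ : ∑ i, Complex.normSq (φ i) = 1)
    (m₁ m₂ : ℝ)
    (hm : (Nd (Matrix.of fun i j => φ i * starRingEnd ℂ (φ j))).charpoly.roots =
      ({(m₁ : ℂ), (m₂ : ℂ)} : Multiset ℂ)) :
    |m₁ - m₂| ≤ opNorm3 T ∧
      1 - (Real.sqrt (m₁ * m₂) + Real.sqrt ((1 - m₁) * (1 - m₂))) ^ 2 ≤ opNorm3 T ∧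
      opNorm3 T < 1 := by
  have hsum : Complex.normSq (φ 0) + Complex.normSq (φ 1) = 1 := by
    simpa [Fin.sum_univ_two] using hφ
  obtain ⟨w, hwdef⟩ : ∃ w : Fin 3 → ℝ, w = ![2*(φ 0 * starRingEnd ℂ (φ 1)).re,
      -2*(φ 0 * starRingEnd ℂ (φ 1)).im, Complex.normSq (φ 0) - Complex.normSq (φ 1)] :=
    ⟨_, rfl⟩
  have hρ : (Matrix.of fun i j => φ i * starRingEnd ℂ (φ j)) = blochState w := by
    subst hwdef
    have h01 : φ 0 * starRingEnd ℂ (φ 0) = (Complex.normSq (φ 0) : ℂ) := Complex.mul_conj _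
    have h11 : φ 1 * starRingEnd ℂ (φ 1) = (Complex.normSq (φ 1) : ℂ) := Complex.mul_conj _
    ext i j
    fin_cases i <;> fin_cases j <;>
      simp [blochState, pauli, Fin.sum_univ_three, Matrix.one_fin_two, h01, h11]
    all_goals {
      apply Complex.ext <;>
        simp [Complex.ext_iff, Complex.normSq_apply] at * <;> ring_nf <;> nlinarith [hsum] }
  have hw : ∑ i, w i ^ 2 = 1 := by
    subst hwdef
    have h1 : Complex.normSq (φ 0 * starRingEnd ℂ (φ 1))
        = Complex.normSq (φ 0) * Complex.normSq (φ 1) := by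
      simp [Complex.normSq_mul, Complex.normSq_conj]
    have h2 := Complex.normSq_apply (φ 0 * starRingEnd ℂ (φ 1))
    simp only [Fin.sum_univ_three, Matrix.cons_val_zero, Matrix.cons_val_one,
      Matrix.head_cons, Matrix.cons_val_two, Matrix.tail_cons]
    nlinarith [hsum, h1, h2]
  have hN1 : N 1 = 1 + ∑ i, (t i : ℂ) • pauli i := by
    have h0 := hBloch 0
    have hb0 : blochState 0 = (1/2 : ℂ) • 1 := by simp [blochState]
    rw [hb0, _root_.map_smul] at h0
    have h2 : N 1 = (2:ℂ) • blochState fun i => t i + T.mulVec 0 i := by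
      rw [← h0]; rw [smul_smul]; norm_num
    rw [h2]
    simp [blochState, Matrix.mulVec_zero, smul_smul]
  have hNp : ∀ j, N (pauli j) = ∑ i, (T i j : ℂ) • pauli i := by
    intro j
    have hb := hBloch (Pi.single j 1)
    have hbs : blochState (Pi.single j 1) = (1/2 : ℂ) • (1 + pauli j) := by
      unfold blochState
      congr 1
      congr 1
      rw [Finset.sum_eq_single j]
      · simp
      · intro b _ hbj; simp [Pi.single_apply, hbj]
      · simp
    rw [hbs, _root_.map_smul, map_add, hN1] at hb
    have h2 : (1 : Matrix (Fin 2) (Fin 2) ℂ) + ∑ i, (t i : ℂ) • pauli i + N (pauli j)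
        = (2:ℂ) • blochState (fun i => t i + T.mulVec (Pi.single j 1) i) := by
      rw [← hb, smul_smul]; norm_num
    have hp : N (pauli j) = (2:ℂ) • blochState (fun i => t i + T.mulVec (Pi.single j 1) i)
        - (1 + ∑ i, (t i : ℂ) • pauli i) := by rw [← h2]; abel
    have hmv : ∀ i, T.mulVec (Pi.single j 1) i = T i j := by
      intro i; simp [Matrix.mulVec_single]
    have hexp : (2:ℂ) • blochState (fun i => t i + T.mulVec (Pi.single j 1) i)
        = 1 + ∑ i, ((t i : ℂ) + (T i j : ℂ)) • pauli i := by
      simp only [blochState, hmv, smul_smul]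
      push_cast
      norm_num
    rw [hp, hexp, Finset.sum_congr rfl (fun i _ => add_smul ((t i : ℂ)) _ (pauli i)),
      Finset.sum_add_distrib]
    abel
  have hent : ∀ p q : Fin 2, Nd (blochState w) p q
      = (blochState w * N (Matrix.single q p 1)).trace := by
    intro p q; rw [← trace_mul_std (Nd (blochState w)) p q, hdual]
  have h00 : Nd (blochState w) 0 0
      = ((((1 + (t 0*w 0 + t 1*w 1 + t 2*w 2)) + (T 0 2*w 0 + T 1 2*w 1 + T 2 2*w 2))/2 : ℝ) : ℂ) := by
    rw [hent, std00, _root_.map_smul, map_add, hN1, hNp]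
    simp only [blochState, pauli, Matrix.trace_fin_two, Matrix.mul_apply, Fin.sum_univ_two,
      Fin.sum_univ_three, Matrix.smul_apply, Matrix.add_apply, Matrix.one_apply,
      Matrix.cons_val', Matrix.cons_val_zero, Matrix.cons_val_one, Matrix.head_cons,
      Matrix.head_fin_const, Matrix.empty_val', Matrix.cons_val_fin_one, smul_eq_mul,
      Matrix.of_apply]
    norm_num
    ring_nf
    simp only [Complex.I_sq, I_cube]
    push_cast
    ring
  have h11 : Nd (blochState w) 1 1
      = ((((1 + (t 0*w 0 + t 1*w 1 + t 2*w 2)) - (T 0 2*w 0 + T 1 2*w 1 + T 2 2*w 2))/2 : ℝ) : ℂ) := by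
    rw [hent, std11, _root_.map_smul, map_sub, hN1, hNp]
    simp only [blochState, pauli, Matrix.trace_fin_two, Matrix.mul_apply, Fin.sum_univ_two,
      Fin.sum_univ_three, Matrix.smul_apply, Matrix.add_apply, Matrix.sub_apply, Matrix.one_apply,
      Matrix.cons_val', Matrix.cons_val_zero, Matrix.cons_val_one, Matrix.head_cons,
      Matrix.head_fin_const, Matrix.empty_val', Matrix.cons_val_fin_one, smul_eq_mul,
      Matrix.of_apply]
    norm_num
    ring_nf
    simp only [Complex.I_sq, I_cube]
    push_cast
    ring
  have h01 : Nd (blochState w) 0 1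
      = (((T 0 0*w 0 + T 1 0*w 1 + T 2 0*w 2 : ℝ) : ℂ)
        - Complex.I * ((T 0 1*w 0 + T 1 1*w 1 + T 2 1*w 2 : ℝ) : ℂ))/2 := by
    rw [hent, std10, _root_.map_smul, map_sub, _root_.map_smul, hNp, hNp]
    simp only [blochState, pauli, Matrix.trace_fin_two, Matrix.mul_apply, Fin.sum_univ_two,
      Fin.sum_univ_three, Matrix.smul_apply, Matrix.add_apply, Matrix.sub_apply, Matrix.one_apply,
      Matrix.cons_val', Matrix.cons_val_zero, Matrix.cons_val_one, Matrix.head_cons,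
      Matrix.head_fin_const, Matrix.empty_val', Matrix.cons_val_fin_one, smul_eq_mul,
      Matrix.of_apply]
    norm_num
    ring_nf
    simp only [Complex.I_sq, I_cube]
    push_cast
    ring
  have h10 : Nd (blochState w) 1 0
      = (((T 0 0*w 0 + T 1 0*w 1 + T 2 0*w 2 : ℝ) : ℂ)
        + Complex.I * ((T 0 1*w 0 + T 1 1*w 1 + T 2 1*w 2 : ℝ) : ℂ))/2 := by
    rw [hent, std01, _root_.map_smul, map_add, _root_.map_smul, hNp, hNp]
    simp only [blochState, pauli, Matrix.trace_fin_two, Matrix.mul_apply, Fin.sum_univ_two,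
      Fin.sum_univ_three, Matrix.smul_apply, Matrix.add_apply, Matrix.sub_apply, Matrix.one_apply,
      Matrix.cons_val', Matrix.cons_val_zero, Matrix.cons_val_one, Matrix.head_cons,
      Matrix.head_fin_const, Matrix.empty_val', Matrix.cons_val_fin_one, smul_eq_mul,
      Matrix.of_apply]
    norm_num
    ring_nf
    simp only [Complex.I_sq, I_cube]
    push_cast
    ring
  have htrace : (Nd (blochState w)).trace
      = (((1 + (t 0*w 0 + t 1*w 1 + t 2*w 2)) : ℝ) : ℂ) := by
    rw [Matrix.trace_fin_two, h00, h11]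
    push_cast
    ring
  have hdet : (Nd (blochState w)).det
      = ((((1 + (t 0*w 0 + t 1*w 1 + t 2*w 2))^2
          - ((T 0 0*w 0 + T 1 0*w 1 + T 2 0*w 2)^2 + (T 0 1*w 0 + T 1 1*w 1 + T 2 1*w 2)^2
            + (T 0 2*w 0 + T 1 2*w 1 + T 2 2*w 2)^2))/4 : ℝ) : ℂ) := by
    rw [Matrix.det_fin_two, h00, h11, h01, h10]
    push_cast
    ring_nf
    simp only [Complex.I_sq, I_cube]
    ring
  rw [hρ] at hm
  have hmonic := (Nd (blochState w)).charpoly_monic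
  have hsplit : (Nd (blochState w)).charpoly.Splits :=
    IsAlgClosed.splits _
  have hfact := hsplit.eq_prod_roots_of_monic hmonic
  rw [hm] at hfact
  have hfact2 : (Nd (blochState w)).charpoly
      = (Polynomial.X - Polynomial.C (m₁:ℂ)) * (Polynomial.X - Polynomial.C (m₂:ℂ)) := by
    simpa using hfact
  have hexp : (Nd (blochState w)).charpoly
      = Polynomial.X^2 - Polynomial.C ((m₁:ℂ) + m₂) * Polynomial.X
        + Polynomial.C ((m₁:ℂ)*m₂) := by
    rw [hfact2, Polynomial.C_add, Polynomial.C_mul]; ring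
  have htr2 : (Nd (blochState w)).trace = ((m₁ : ℂ) + m₂) := by
    rw [Matrix.trace_eq_neg_charpoly_coeff, hexp]
    simp [Polynomial.coeff_X_pow]
  have hdet2 : (Nd (blochState w)).det = ((m₁ : ℂ) * m₂) := by
    rw [Matrix.det_eq_sign_charpoly_coeff, hexp]
    simp [Polynomial.coeff_X_pow]
  have hR1 : m₁ + m₂ = 1 + (t 0*w 0 + t 1*w 1 + t 2*w 2) := by
    have h := htr2.symm.trans htrace
    exact_mod_cast h
  have hR2 : m₁ * m₂ = ((1 + (t 0*w 0 + t 1*w 1 + t 2*w 2))^2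
      - ((T 0 0*w 0 + T 1 0*w 1 + T 2 0*w 2)^2 + (T 0 1*w 0 + T 1 1*w 1 + T 2 1*w 2)^2
        + (T 0 2*w 0 + T 1 2*w 1 + T 2 2*w 2)^2))/4 := by
    have h := hdet2.symm.trans hdet
    exact_mod_cast h
  have hsq : (m₁ - m₂)^2 = ∑ i, (T.transpose.mulVec w i)^2 := by
    simp only [Fin.sum_univ_three, Matrix.mulVec, dotProduct,
      Matrix.transpose_apply, Fin.sum_univ_three]
    linear_combination (m₁ + m₂ + (1 + (t 0*w 0 + t 1*w 1 + t 2*w 2))) * hR1 - 4 * hR2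
  have habs : |m₁ - m₂| ≤ opNorm3 T := by
    set x : EuclideanSpace ℝ (Fin 3) := (WithLp.equiv 2 _).symm w with hx
    have hxn : ‖x‖ = 1 := by
      rw [EuclideanSpace.norm_eq]
      simp only [hx, WithLp.equiv_symm_apply, WithLp.ofLp_toLp, Real.norm_eq_abs, _root_.sq_abs]
      rw [hw]; exact Real.sqrt_one
    have happ : Matrix.toEuclideanCLM (𝕜 := ℝ) T.transpose x
        = (WithLp.equiv 2 _).symm (T.transpose.mulVec w) := by
      rw [hx]; rfl
    have hnv : ‖Matrix.toEuclideanCLM (𝕜 := ℝ) T.transpose x‖ = |m₁ - m₂| := by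
      rw [happ, EuclideanSpace.norm_eq]
      simp only [WithLp.equiv_symm_apply, WithLp.ofLp_toLp, Real.norm_eq_abs, _root_.sq_abs]
      rw [← hsq, Real.sqrt_sq_eq_abs]
    have hTt : opNorm3 T.transpose = opNorm3 T := by
      unfold opNorm3
      have hstar : T.transpose = star T := rfl
      rw [hstar, map_star, ContinuousLinearMap.star_eq_adjoint]
      exact ContinuousLinearMap.adjoint.norm_map (Matrix.toEuclideanCLM (𝕜 := ℝ) T)
    calc |m₁ - m₂| = ‖Matrix.toEuclideanCLM (𝕜 := ℝ) T.transpose x‖ := hnv.symm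
      _ ≤ ‖Matrix.toEuclideanCLM (𝕜 := ℝ) T.transpose‖ * ‖x‖ :=
          ContinuousLinearMap.le_opNorm _ _
      _ = opNorm3 T := by rw [hxn, mul_one, ← hTt]; rfl
  exact ⟨habs, (scalar_ineq m₁ m₂).trans habs, hT⟩

end
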